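/- Let F = Σ_{k≥0} x^{(2k+1)^2} ∈ (Z/2)[[x]] and G = F(x^3). Define Tr : (Z/2)(F,G) → (Z/2)(G) to be the field trace of the degree-4 extension. Then Tr(G) = 0, Tr(F) = 0, Tr(F^2 G) = 0, and Tr(F^3) = G. -/

import Mathlib

open scoped Classical
set_option synthInstance.maxHeartbeats 1000000
set_option maxHeartbeats 1000000

noncomputable def F : PowerSeries (ZMod 2) :=
  PowerSeries.mk fun n => if ∃ k, n = (2 * k + 1) ^ 2 then 1 else 0

noncomputable def G : PowerSeries (ZMod 2) :=
  PowerSeries.mk fun n => if ∃ k, n = 3 * (2 * k + 1) ^ 2 then 1 else 0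

noncomputable abbrev K : Type := FractionRing (PowerSeries (ZMod 2))

noncomputable def F' : K := algebraMap (PowerSeries (ZMod 2)) K F
noncomputable def G' : K := algebraMap (PowerSeries (ZMod 2)) K G

/-- The subfield `(Z/2)(G)` of `K`. -/
noncomputable def E : Subfield K := Subfield.closure {G'}

/-- The field `(Z/2)(F,G) = (Z/2)(G)(F)`. -/
noncomputable def L : IntermediateField E K := IntermediateField.adjoin E {F'}

noncomputable def g : E := ⟨G', Subfield.subset_closure rfl⟩

noncomputable def Fe : L := ⟨F', IntermediateField.mem_adjoin_simple_self E F'⟩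

noncomputable def gL : L := algebraMap E L g



def hdiff (x y : ℕ) : ℕ := (max x y - min x y) / 2

def step (x y : ℕ) : ℕ × ℕ :=
  if (x + y) % 4 = 0 then ((x + 3 * y) / 2, hdiff x y)
  else (hdiff x (3 * y), (x + y) / 2)

lemma no3 : ∀ a b : ℕ, a ^ 2 = 3 * b ^ 2 → b = 0 := by
  intro a
  induction a using Nat.strong_induction_on with
  | _ a ih =>
    intro b h
    rcases Nat.eq_zero_or_pos b with hb | hb
    · exact hb
    have h3 : 3 ∣ a := by
      have : (3:ℕ).Prime := by norm_num
      exact this.dvd_of_dvd_pow (h ▸ Dvd.intro (b^2) rfl)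
    obtain ⟨c, rfl⟩ := h3
    have hb2 : b ^ 2 = 3 * c ^ 2 := by nlinarith
    have hba : b < 3 * c := by nlinarith
    have := ih b (by nlinarith) c hb2
    omega

lemma master {x y : ℕ} (hx : Odd x) (hy : Odd y) :
    Odd (step x y).1 ∧ Odd (step x y).2 ∧
    (step x y).1 ^ 2 + 3 * (step x y).2 ^ 2 = x ^ 2 + 3 * y ^ 2 ∧
    step (step x y).1 (step x y).2 = (x, y) ∧
    (step x y = (x, y) ↔ (x = y ∨ x = 3 * y)) := by
  obtain ⟨u, rfl⟩ := hx
  obtain ⟨v, rfl⟩ := hy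
  rcases Nat.even_or_odd (u + v) with huv | huv
  · -- (x+y)%4 = 2
    obtain ⟨t, ht⟩ := huv
    have h4 : ¬ ((2*u+1) + (2*v+1)) % 4 = 0 := by omega
    rcases le_or_gt u (3*v) with hle | hlt
    · obtain ⟨e, he⟩ : ∃ e, u + e = 3*v + 1 := ⟨3*v+1-u, by omega⟩
      have he1 : e % 2 = 1 := by omega
      have hs : step (2*u+1) (2*v+1) = (e, u+v+1) := by
        unfold step hdiff; rw [if_neg h4, Prod.mk.injEq]; constructor <;> omega
      rw [hs]; dsimp only
      refine ⟨Nat.odd_iff.mpr he1, Nat.odd_iff.mpr (by omega), by nlinarith, ?_, ?_⟩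
      · have h4' : ¬ (e + (u+v+1)) % 4 = 0 := by omega
        unfold step hdiff; rw [if_neg h4', Prod.mk.injEq]; constructor <;> omega
      · constructor
        · intro hfix
          have h1 : e = 2*u+1 := congrArg Prod.fst hfix
          left; omega
        · intro hcase
          rcases hcase with h | h
          · rw [Prod.mk.injEq]; constructor <;> omega
          · exfalso; omega
    · obtain ⟨e, he⟩ : ∃ e, u = 3*v + 1 + e := ⟨u-3*v-1, by omega⟩
      have he1 : e % 2 = 1 := by omega
      have hs : step (2*u+1) (2*v+1) = (e, u+v+1) := by
        unfold step hdiff; rw [if_neg h4, Prod.mk.injEq]; constructor <;> omega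
      rw [hs]; dsimp only
      refine ⟨Nat.odd_iff.mpr he1, Nat.odd_iff.mpr (by omega), by nlinarith, ?_, ?_⟩
      · have h4' : (e + (u+v+1)) % 4 = 0 := by omega
        unfold step hdiff; rw [if_pos h4', Prod.mk.injEq]; constructor <;> omega
      · constructor
        · intro hfix
          have h1 : e = 2*u+1 := congrArg Prod.fst hfix
          exfalso; omega
        · intro hcase; exfalso; rcases hcase with h | h <;> omega
  · -- (x+y)%4 = 0
    obtain ⟨t, ht⟩ := huv
    have h4 : ((2*u+1) + (2*v+1)) % 4 = 0 := by omega
    rcases le_or_gt v u with hle | hlt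
    · obtain ⟨e, rfl⟩ : ∃ e, u = v + e := ⟨u-v, by omega⟩
      have he1 : e % 2 = 1 := by omega
      have hs : step (2*(v+e)+1) (2*v+1) = (4*v+e+2, e) := by
        unfold step hdiff; rw [if_pos h4, Prod.mk.injEq]; constructor <;> omega
      rw [hs]; dsimp only
      refine ⟨Nat.odd_iff.mpr (by omega), Nat.odd_iff.mpr he1, by nlinarith, ?_, ?_⟩
      · have h4' : ((4*v+e+2) + e) % 4 = 0 := by omega
        unfold step hdiff; rw [if_pos h4', Prod.mk.injEq]; constructor <;> omega
      · constructor
        · intro hfix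
          have h1 : 4*v+e+2 = 2*(v+e)+1 := congrArg Prod.fst hfix
          right; omega
        · intro hcase
          rcases hcase with h | h
          · exfalso; omega
          · rw [Prod.mk.injEq]; constructor <;> omega
    · obtain ⟨e, rfl⟩ : ∃ e, v = u + e := ⟨v-u, by omega⟩
      have he1 : e % 2 = 1 := by omega
      have hs : step (2*u+1) (2*(u+e)+1) = (4*u+3*e+2, e) := by
        unfold step hdiff; rw [if_pos h4, Prod.mk.injEq]; constructor <;> omega
      rw [hs]; dsimp only
      refine ⟨Nat.odd_iff.mpr (by omega), Nat.odd_iff.mpr he1, by nlinarith, ?_, ?_⟩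
      · have h4' : ¬ ((4*u+3*e+2) + e) % 4 = 0 := by omega
        unfold step hdiff; rw [if_neg h4', Prod.mk.injEq]; constructor <;> omega
      · constructor
        · intro hfix
          have h1 : 4*u+3*e+2 = 2*u+1 := congrArg Prod.fst hfix
          exfalso; omega
        · intro hcase; exfalso; rcases hcase with h | h <;> omega

lemma zmod2_add_self (x : ZMod 2) : x + x = 0 := by
  fin_cases x <;> decide

/-- squaring an indicator series over ZMod 2 -/
lemma ind_sq (P : ℕ → Prop) :
    (PowerSeries.mk fun n => if P n then (1 : ZMod 2) else 0) ^ 2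
      = PowerSeries.mk fun n => if ∃ m, n = m + m ∧ P m then 1 else 0 := by
  ext n
  rw [pow_two, PowerSeries.coeff_mul, PowerSeries.coeff_mk]
  simp only [PowerSeries.coeff_mk]
  set f : ℕ × ℕ → ZMod 2 :=
    fun p => (if P p.1 then (1:ZMod 2) else 0) * (if P p.2 then 1 else 0) with hf
  by_cases h : ∃ m, n = m + m ∧ P m
  · obtain ⟨m, hm, hPm⟩ := h
    rw [if_pos ⟨m, hm, hPm⟩]
    have hmem : ((m, m) : ℕ × ℕ) ∈ Finset.HasAntidiagonal.antidiagonal n := by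
      rw [Finset.HasAntidiagonal.mem_antidiagonal]; omega
    rw [← Finset.add_sum_erase _ f hmem]
    have hsum : ∑ p ∈ (Finset.HasAntidiagonal.antidiagonal n).erase (m, m), f p = 0 := by
      apply Finset.sum_involution (fun p _ => Prod.swap p)
      · intro p hp
        have : f (Prod.swap p) = f p := by simp only [hf, Prod.fst_swap, Prod.snd_swap]; ring
        rw [this]; exact zmod2_add_self _
      · intro p hp _
        intro hcon
        have h1 : p.2 = p.1 := congrArg Prod.fst hcon
        have hp' := Finset.mem_of_mem_erase hp
        rw [Finset.HasAntidiagonal.mem_antidiagonal] at hp'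
        have : p = (m, m) := by
          have : p.1 = m := by omega
          ext <;> simp [this, h1] <;> omega
        exact Finset.notMem_erase _ _ (this ▸ hp)
      · intro p hp
        rw [Finset.mem_erase] at hp ⊢
        rw [Finset.HasAntidiagonal.mem_antidiagonal] at hp ⊢
        constructor
        · intro hcon
          apply hp.1
          have h1 : p.1 = m := congrArg Prod.snd hcon
          have h2 : p.2 = m := congrArg Prod.fst hcon
          ext <;> simp [h1, h2]
        · simp only [Prod.fst_swap, Prod.snd_swap]; omega
      · intro p _; rfl
    rw [hsum, add_zero]
    show (if P m then (1:ZMod 2) else 0) * (if P m then 1 else 0) = 1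
    rw [if_pos hPm, one_mul]
  · rw [if_neg h]
    apply Finset.sum_involution (fun p _ => Prod.swap p)
    · intro p hp
      show f p + f (Prod.swap p) = 0
      have : f (Prod.swap p) = f p := by simp only [hf, Prod.fst_swap, Prod.snd_swap]; ring
      rw [this]; exact zmod2_add_self _
    · intro p hp hfp hcon
      have h1 : p.2 = p.1 := congrArg Prod.fst hcon
      rw [Finset.HasAntidiagonal.mem_antidiagonal] at hp
      have hfp' : f p ≠ 0 := hfp
      have hP : P p.1 := by
        by_contra hP
        exact hfp' (by rw [hf]; simp [hP])
      exact absurd ⟨p.1, by omega, hP⟩ h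
    · intro p hp
      rw [Finset.HasAntidiagonal.mem_antidiagonal] at hp ⊢
      simp only [Prod.fst_swap, Prod.snd_swap]; omega
    · intro p _; rfl

lemma mk_congr {P Q : ℕ → Prop} (h : ∀ n, P n ↔ Q n) :
    (PowerSeries.mk fun n => if P n then (1 : ZMod 2) else 0)
      = PowerSeries.mk fun n => if Q n then 1 else 0 := by
  ext n
  simp only [PowerSeries.coeff_mk]
  by_cases hn : P n
  · rw [if_pos hn, if_pos ((h n).mp hn)]
  · rw [if_neg hn, if_neg (fun hq => hn ((h n).mpr hq))]

lemma F4 : F ^ 4 = PowerSeries.mk fun n => if ∃ k, n = 4 * (2 * k + 1) ^ 2 then 1 else 0 := by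
  have : F ^ 4 = (F ^ 2) ^ 2 := by ring
  rw [this, F, ind_sq, ind_sq]
  apply mk_congr
  intro n
  constructor
  · rintro ⟨m, hm, m', hm', k, hk⟩
    exact ⟨k, by subst hk; omega⟩
  · rintro ⟨k, hk⟩
    exact ⟨2 * (2*k+1)^2, by omega, (2*k+1)^2, by omega, k, rfl⟩

lemma G4 : G ^ 4 = PowerSeries.mk fun n => if ∃ k, n = 12 * (2 * k + 1) ^ 2 then 1 else 0 := by
  have : G ^ 4 = (G ^ 2) ^ 2 := by ring
  rw [this, G, ind_sq, ind_sq]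
  apply mk_congr
  intro n
  constructor
  · rintro ⟨m, hm, m', hm', k, hk⟩
    exact ⟨k, by subst hk; omega⟩
  · rintro ⟨k, hk⟩
    exact ⟨6 * (2*k+1)^2, by omega, 3 * (2*k+1)^2, by omega, k, rfl⟩

/-- representation predicate -/
def Rp (p : ℕ × ℕ) : Prop :=
  (∃ a, p.1 = (2 * a + 1) ^ 2) ∧ (∃ b, p.2 = 3 * (2 * b + 1) ^ 2)

noncomputable def find2 (p : ℕ × ℕ) : ZMod 2 :=
  (if ∃ a, p.1 = (2 * a + 1) ^ 2 then 1 else 0) * (if ∃ b, p.2 = 3 * (2 * b + 1) ^ 2 then 1 else 0)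

lemma find2_eq (p : ℕ × ℕ) : find2 p = if Rp p then 1 else 0 := by
  unfold find2 Rp
  by_cases h1 : ∃ a, p.1 = (2*a+1)^2 <;> by_cases h2 : ∃ b, p.2 = 3*(2*b+1)^2 <;>
    simp [h1, h2]

noncomputable def sig (p : ℕ × ℕ) : ℕ × ℕ :=
  if Odd p.1.sqrt ∧ Odd ((p.2/3).sqrt) ∧ p.1 = p.1.sqrt ^ 2 ∧ p.2 = 3 * ((p.2/3).sqrt) ^ 2 then
    ((step p.1.sqrt ((p.2/3).sqrt)).1 ^ 2, 3 * (step p.1.sqrt ((p.2/3).sqrt)).2 ^ 2)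
  else p

lemma sig_eval {p : ℕ × ℕ} {x y : ℕ} (hox : Odd x) (hoy : Odd y)
    (h1 : p.1 = x ^ 2) (h2 : p.2 = 3 * y ^ 2) :
    sig p = ((step x y).1 ^ 2, 3 * (step x y).2 ^ 2) := by
  have hsx : p.1.sqrt = x := by rw [h1]; exact Nat.sqrt_eq' x
  have hsy : (p.2/3).sqrt = y := by
    rw [h2, Nat.mul_div_cancel_left _ (by norm_num)]; exact Nat.sqrt_eq' y
  unfold sig
  rw [hsx, hsy, if_pos ⟨hox, hoy, h1, h2⟩]

lemma sig_of_rep {p : ℕ × ℕ} (h : Rp p) :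
    Rp (sig p) ∧ (sig p).1 + (sig p).2 = p.1 + p.2 ∧ sig (sig p) = p ∧
      (sig p = p ↔ ((∃ x, Odd x ∧ p = (x ^ 2, 3 * x ^ 2)) ∨
        (∃ y, Odd y ∧ p = (9 * y ^ 2, 3 * y ^ 2)))) := by
  obtain ⟨⟨a, ha⟩, ⟨b, hb⟩⟩ := h
  set x := 2 * a + 1 with hx
  set y := 2 * b + 1 with hy
  have hox : Odd x := ⟨a, by omega⟩
  have hoy : Odd y := ⟨b, by omega⟩
  have hsig : sig p = ((step x y).1 ^ 2, 3 * (step x y).2 ^ 2) := sig_eval hox hoy ha hb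
  obtain ⟨hox', hoy', hsum, hinv, hfix⟩ := master hox hoy
  obtain ⟨a', ha'⟩ := hox'
  obtain ⟨b', hb'⟩ := hoy'
  have hrep' : Rp (sig p) := by
    rw [hsig]; exact ⟨⟨a', by rw [ha']⟩, ⟨b', by rw [hb']⟩⟩
  have hpinj : ∀ u v : ℕ, u ^ 2 = v ^ 2 → u = v := fun u v huv =>
    Nat.pow_left_injective (by norm_num) huv
  refine ⟨hrep', ?_, ?_, ?_⟩
  · rw [hsig]; dsimp only; rw [ha, hb]; omega
  · have h2 : sig (sig p) = ((step (step x y).1 (step x y).2).1 ^ 2,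
        3 * (step (step x y).1 (step x y).2).2 ^ 2) := by
      apply sig_eval ⟨a', by omega⟩ ⟨b', by omega⟩ <;> rw [hsig]
    rw [h2, hinv]
    dsimp only
    rw [← ha, ← hb]
  · rw [hsig]
    constructor
    · intro hcon
      have h1 : (step x y).1 ^ 2 = p.1 := congrArg Prod.fst hcon
      have h2 : 3 * (step x y).2 ^ 2 = p.2 := congrArg Prod.snd hcon
      have e1 : (step x y).1 = x := hpinj _ _ (by rw [h1, ha])
      have e2 : (step x y).2 = y := hpinj _ _ (by rw [hb] at h2; omega)
      have hst : step x y = (x, y) := by rw [Prod.ext_iff]; exact ⟨e1, e2⟩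
      rcases hfix.mp hst with hxy | hx3y
      · left
        refine ⟨x, hox, ?_⟩
        rw [Prod.ext_iff]
        refine ⟨ha, ?_⟩
        show p.2 = 3 * x ^ 2
        rw [hb, hxy]
      · right
        refine ⟨y, hoy, ?_⟩
        rw [Prod.ext_iff]
        refine ⟨?_, hb⟩
        show p.1 = 9 * y ^ 2
        rw [ha, hx3y]; ring
    · intro hcase
      have hxy : x = y ∨ x = 3 * y := by
        rcases hcase with ⟨x0, _, hp⟩ | ⟨y0, _, hp⟩
        · have h1 : p.1 = x0 ^ 2 := congrArg Prod.fst hp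
          have h2 : p.2 = 3 * x0 ^ 2 := congrArg Prod.snd hp
          left
          have ex : x = x0 := hpinj _ _ (by rw [← ha, h1])
          have ey : y = x0 := hpinj _ _ (by rw [hb] at h2; omega)
          rw [ex, ey]
        · have h1 : p.1 = 9 * y0 ^ 2 := congrArg Prod.fst hp
          have h2 : p.2 = 3 * y0 ^ 2 := congrArg Prod.snd hp
          right
          have ey : y = y0 := hpinj _ _ (by rw [hb] at h2; omega)
          have ex : x = 3 * y0 := hpinj _ _ (by rw [← ha, h1]; ring)
          rw [ex, ey]
      have := hfix.mpr hxy
      rw [this, Prod.ext_iff]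
      exact ⟨ha.symm, hb.symm⟩

lemma sig_of_not_rep {p : ℕ × ℕ} (h : ¬ Rp p) : sig p = p := by
  unfold sig
  rw [if_neg]
  rintro ⟨h1, h2, h3, h4⟩
  obtain ⟨a, ha⟩ := h1
  obtain ⟨b, hb⟩ := h2
  exact h ⟨⟨a, by rw [h3, ha]⟩, ⟨b, by rw [h4, hb]⟩⟩

lemma sig_sig (p : ℕ × ℕ) : sig (sig p) = p := by
  by_cases h : Rp p
  · exact (sig_of_rep h).2.2.1
  · rw [sig_of_not_rep h, sig_of_not_rep h]

lemma find2_sig (p : ℕ × ℕ) : find2 (sig p) = find2 p := by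
  by_cases h : Rp p
  · rw [find2_eq, find2_eq, if_pos h, if_pos (sig_of_rep h).1]
  · rw [sig_of_not_rep h]

lemma sum_erase_zero (n : ℕ) (pt : ℕ × ℕ) (hpt : sig pt = pt)
    (hfix : ∀ p, p ∈ (Finset.HasAntidiagonal.antidiagonal n).erase pt → sig p = p → find2 p = 0) :
    ∑ p ∈ (Finset.HasAntidiagonal.antidiagonal n).erase pt, find2 p = 0 := by
  apply Finset.sum_involution (fun p _ => sig p)
  · intro p hp
    show find2 p + find2 (sig p) = 0
    rw [find2_sig]; exact zmod2_add_self _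
  · intro p hp hne hcon
    exact hne (hfix p hp hcon)
  · intro p hp
    rw [Finset.mem_erase] at hp ⊢
    refine ⟨?_, ?_⟩
    · intro hcon
      exact hp.1 (by rw [← sig_sig p, hcon, hpt])
    · rw [Finset.HasAntidiagonal.mem_antidiagonal] at *
      by_cases h : Rp p
      · rw [(sig_of_rep h).2.1]; exact hp.2
      · rw [sig_of_not_rep h]; exact hp.2
  · intro p _; exact sig_sig p

lemma sum_full_zero (n : ℕ)
    (hfix : ∀ p, p ∈ Finset.HasAntidiagonal.antidiagonal n → sig p = p → find2 p = 0) :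
    ∑ p ∈ Finset.HasAntidiagonal.antidiagonal n, find2 p = 0 := by
  apply Finset.sum_involution (fun p _ => sig p)
  · intro p hp
    show find2 p + find2 (sig p) = 0
    rw [find2_sig]; exact zmod2_add_self _
  · intro p hp hne hcon
    exact hne (hfix p hp hcon)
  · intro p hp
    rw [Finset.HasAntidiagonal.mem_antidiagonal] at *
    by_cases h : Rp p
    · rw [(sig_of_rep h).2.1]; exact hp
    · rw [sig_of_not_rep h]; exact hp
  · intro p _; exact sig_sig p

lemma find2_ne_imp_Rp {p : ℕ × ℕ} (h : find2 p ≠ 0) : Rp p := by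
  by_contra hc
  rw [find2_eq, if_neg hc] at h
  exact h rfl

theorem key : F * G = F ^ 4 + G ^ 4 := by
  ext n
  rw [PowerSeries.coeff_mul, map_add, F4, G4, PowerSeries.coeff_mk, PowerSeries.coeff_mk]
  have hterm : ∀ p : ℕ × ℕ,
      (PowerSeries.coeff p.1) F * (PowerSeries.coeff p.2) G = find2 p := by
    intro p
    rw [F, G, PowerSeries.coeff_mk, PowerSeries.coeff_mk]
    rfl
  rw [Finset.sum_congr rfl (fun p _ => hterm p)]
  by_cases h1 : ∃ k, n = 4 * (2 * k + 1) ^ 2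
  · obtain ⟨k, hk⟩ := h1
    set x := 2 * k + 1 with hxdef
    have hox : Odd x := ⟨k, by omega⟩
    set pt : ℕ × ℕ := (x ^ 2, 3 * x ^ 2) with hptdef
    have hptm : pt ∈ Finset.HasAntidiagonal.antidiagonal n := by
      rw [Finset.HasAntidiagonal.mem_antidiagonal]; simp only [hptdef]; omega
    have hRpt : Rp pt := ⟨⟨k, rfl⟩, ⟨k, rfl⟩⟩
    have hptfix : sig pt = pt := by
      rw [sig_eval hox hox rfl rfl]
      obtain ⟨_, _, _, _, hfix⟩ := master hox hox
      rw [hfix.mpr (Or.inl rfl)]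
    have h12 : ¬ ∃ j, n = 12 * (2 * j + 1) ^ 2 := by
      rintro ⟨j, hj⟩
      have h3 : x ^ 2 = 3 * (2 * j + 1) ^ 2 := by omega
      have := no3 _ _ h3
      omega
    have hzero : ∑ p ∈ (Finset.HasAntidiagonal.antidiagonal n).erase pt, find2 p = 0 := by
      apply sum_erase_zero n pt hptfix
      intro p hp hfixp
      by_contra hne
      have hRp := find2_ne_imp_Rp hne
      rw [Finset.mem_erase, Finset.HasAntidiagonal.mem_antidiagonal] at hp
      rcases ((sig_of_rep hRp).2.2.2.mp hfixp) with ⟨x0, hox0, hp0⟩ | ⟨y0, hoy0, hp0⟩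
      · have h1 : p.1 = x0 ^ 2 := congrArg Prod.fst hp0
        have h2 : p.2 = 3 * x0 ^ 2 := congrArg Prod.snd hp0
        have hx0 : x0 ^ 2 = x ^ 2 := by omega
        have : x0 = x := Nat.pow_left_injective (by norm_num) hx0
        exact hp.1 (by rw [hp0, this])
      · have h1 : p.1 = 9 * y0 ^ 2 := congrArg Prod.fst hp0
        have h2 : p.2 = 3 * y0 ^ 2 := congrArg Prod.snd hp0
        have h3 : x ^ 2 = 3 * y0 ^ 2 := by omega
        have := no3 _ _ h3
        rcases hoy0 with ⟨c, hc⟩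
        omega
    rw [if_pos ⟨k, hk⟩, if_neg h12, ← Finset.add_sum_erase _ find2 hptm,
      hzero, add_zero, find2_eq, if_pos hRpt]
    norm_num
  · by_cases h2 : ∃ k, n = 12 * (2 * k + 1) ^ 2
    · obtain ⟨k, hk⟩ := h2
      set y := 2 * k + 1 with hydef
      have hoy : Odd y := ⟨k, by omega⟩
      have hox : Odd (3 * y) := ⟨3 * k + 1, by omega⟩
      set pt : ℕ × ℕ := (9 * y ^ 2, 3 * y ^ 2) with hptdef
      have hptm : pt ∈ Finset.HasAntidiagonal.antidiagonal n := by
        rw [Finset.HasAntidiagonal.mem_antidiagonal]; simp only [hptdef]; omega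
      have hRpt : Rp pt := ⟨⟨3 * k + 1, by simp only [hptdef, hydef]; ring⟩, ⟨k, rfl⟩⟩
      have hptfix : sig pt = pt := by
        have h1 : pt.1 = (3 * y) ^ 2 := by simp only [hptdef]; ring
        rw [sig_eval hox hoy h1 rfl]
        obtain ⟨_, _, _, _, hfix⟩ := master hox hoy
        rw [hfix.mpr (Or.inr rfl)]
        rw [Prod.ext_iff]
        exact ⟨by dsimp only; ring, rfl⟩
      have hzero : ∑ p ∈ (Finset.HasAntidiagonal.antidiagonal n).erase pt, find2 p = 0 := by
        apply sum_erase_zero n pt hptfix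
        intro p hp hfixp
        by_contra hne
        have hRp := find2_ne_imp_Rp hne
        rw [Finset.mem_erase, Finset.HasAntidiagonal.mem_antidiagonal] at hp
        rcases ((sig_of_rep hRp).2.2.2.mp hfixp) with ⟨x0, hox0, hp0⟩ | ⟨y0, hoy0, hp0⟩
        · have ha : p.1 = x0 ^ 2 := congrArg Prod.fst hp0
          have hb : p.2 = 3 * x0 ^ 2 := congrArg Prod.snd hp0
          have h3 : x0 ^ 2 = 3 * y ^ 2 := by omega
          have := no3 _ _ h3
          omega
        · have ha : p.1 = 9 * y0 ^ 2 := congrArg Prod.fst hp0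
          have hb : p.2 = 3 * y0 ^ 2 := congrArg Prod.snd hp0
          have hy0 : y0 ^ 2 = y ^ 2 := by omega
          have : y0 = y := Nat.pow_left_injective (by norm_num) hy0
          exact hp.1 (by rw [hp0, this])
      rw [if_neg h1, if_pos ⟨k, hk⟩, ← Finset.add_sum_erase _ find2 hptm,
        hzero, add_zero, find2_eq, if_pos hRpt]
      norm_num
    · rw [if_neg h1, if_neg h2, add_zero]
      apply sum_full_zero
      intro p hp hfixp
      by_contra hne
      have hRp := find2_ne_imp_Rp hne
      rw [Finset.HasAntidiagonal.mem_antidiagonal] at hp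
      rcases ((sig_of_rep hRp).2.2.2.mp hfixp) with ⟨x0, hox0, hp0⟩ | ⟨y0, hoy0, hp0⟩
      · have ha : p.1 = x0 ^ 2 := congrArg Prod.fst hp0
        have hb : p.2 = 3 * x0 ^ 2 := congrArg Prod.snd hp0
        rcases hox0 with ⟨c, hc⟩
        refine absurd ⟨c, ?_⟩ h1
        rw [show 2*c+1 = x0 by omega]
        omega
      · have ha : p.1 = 9 * y0 ^ 2 := congrArg Prod.fst hp0
        have hb : p.2 = 3 * y0 ^ 2 := congrArg Prod.snd hp0
        rcases hoy0 with ⟨c, hc⟩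
        refine absurd ⟨c, ?_⟩ h2
        rw [show 2*c+1 = y0 by omega]
        omega


section

open Polynomial
noncomputable section

abbrev R2 := Polynomial (ZMod 2)

instance : CharP R2 2 := by infer_instance

lemma zmod2_cases (x : ZMod 2) : x = 0 ∨ x = 1 := by fin_cases x <;> [exact Or.inl rfl; exact Or.inr rfl]

def q0 : Polynomial R2 := X ^ 4 + (C Polynomial.X * X + C (Polynomial.X ^ 4))

lemma tail_natDegree : (C (Polynomial.X : R2) * X + C (Polynomial.X ^ 4)).natDegree ≤ 1 := by
  apply le_trans (natDegree_add_le _ _)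
  simp [natDegree_C]

lemma q0_monic : q0.Monic := by
  unfold q0
  apply Polynomial.monic_X_pow_add
  have h1 : (C (Polynomial.X : R2) * X).degree ≤ 1 := by
    calc (C (Polynomial.X : R2) * X).degree ≤ 0 + 1 :=
          le_trans (degree_mul_le _ _) (add_le_add degree_C_le degree_X_le)
      _ = 1 := by norm_num
  calc (C (Polynomial.X : R2) * X + C (Polynomial.X ^ 4)).degree
      ≤ max (C (Polynomial.X : R2) * X).degree (C ((Polynomial.X : R2) ^ 4)).degree :=
        degree_add_le _ _
    _ ≤ max 1 0 := max_le_max h1 degree_C_le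
    _ < 4 := by norm_num

lemma q0_natDegree : q0.natDegree = 4 := by
  unfold q0
  rw [Polynomial.natDegree_add_eq_left_of_natDegree_lt, natDegree_X_pow]
  rw [natDegree_X_pow]
  have := tail_natDegree
  omega

lemma noroot (r : R2) : r ^ 4 + Polynomial.X * r + Polynomial.X ^ 4 ≠ 0 := by
  intro h
  have h1 := congrArg (Polynomial.eval 1) h
  simp only [eval_add, eval_mul, eval_pow, eval_X, eval_zero, one_mul] at h1
  rcases zmod2_cases (Polynomial.eval 1 r) with hc | hc <;> rw [hc] at h1 <;> revert h1 <;> decide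

lemma monic_of_factor {a b : Polynomial R2} (hab : q0 = a * b) : a.Monic := by
  have hlc : a.leadingCoeff * b.leadingCoeff = 1 := by
    rw [← leadingCoeff_mul, ← hab]; exact q0_monic
  have hua : IsUnit a.leadingCoeff := IsUnit.of_mul_eq_one _ hlc
  rcases Polynomial.isUnit_iff.mp hua with ⟨r, hru, hr⟩
  rcases zmod2_cases r with h0 | h1
  · rw [h0] at hru; simp at hru
  · rw [h1] at hr
    unfold Polynomial.Monic
    rw [← hr, map_one]

lemma nofac1 {a b : Polynomial R2} (hma : a.Monic) (h1 : a.natDegree = 1)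
    (hab : q0 = a * b) : False := by
  have hform := Polynomial.eq_X_add_C_of_natDegree_le_one (le_of_eq h1)
  have hc1 : a.coeff 1 = 1 := by
    have := hma.coeff_natDegree
    rwa [h1] at this
  rw [hc1, map_one, one_mul] at hform
  set r := a.coeff 0 with hr
  have haeval : a.eval r = 0 := by
    rw [hform]
    simp [CharTwo.add_self_eq_zero]
  have hq0 : q0.eval r = 0 := by
    rw [hab, eval_mul, haeval, zero_mul]
  unfold q0 at hq0
  simp only [eval_add, eval_mul, eval_pow, eval_X, eval_C] at hq0
  have : r ^ 4 + Polynomial.X * r + Polynomial.X ^ 4 = 0 := by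
    rw [← hq0]; ring
  exact noroot r this

lemma quad_form {p : Polynomial R2} (hm : p.Monic) (h2 : p.natDegree = 2) :
    p = X ^ 2 + C (p.coeff 1) * X + C (p.coeff 0) := by
  ext n
  match n with
  | 0 => simp
  | 1 => simp [coeff_X_pow]
  | 2 =>
    have : p.coeff 2 = 1 := by
      have := hm.coeff_natDegree; rwa [h2] at this
    simp [coeff_X_pow, this]
  | (n+3) =>
    have hz : p.coeff (n+3) = 0 := coeff_eq_zero_of_natDegree_lt (by omega)
    rw [hz]
    simp [coeff_X_pow, coeff_C]

lemma nofac2 {a b : Polynomial R2} (hma : a.Monic) (hmb : b.Monic)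
    (h2a : a.natDegree = 2) (h2b : b.natDegree = 2) (hab : q0 = a * b) : False := by
  set a1 := a.coeff 1
  set a0 := a.coeff 0
  set b1 := b.coeff 1
  set b0 := b.coeff 0
  have hexp : a * b = X ^ 4 + C (a1 + b1) * X ^ 3 + C (a0 + b0 + a1 * b1) * X ^ 2
      + C (a1 * b0 + a0 * b1) * X + C (a0 * b0) := by
    rw [quad_form hma h2a, quad_form hmb h2b]
    simp only [map_add, map_mul]
    ring
  rw [hexp] at hab
  have e3 := congrArg (fun p => p.coeff 3) hab
  have e2 := congrArg (fun p => p.coeff 2) hab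
  have e1 := congrArg (fun p => p.coeff 1) hab
  simp only [q0, coeff_add, coeff_C_mul, coeff_X_pow, coeff_C, coeff_X, mul_one, mul_zero,
    if_true, if_false] at e3 e2 e1
  norm_num at e3 e2 e1
  -- e3 : 0 = a1 + b1, e2 : 0 = a0 + b0 + a1 * b1, e1 : X = a1*b0 + a0*b1
  have hb1 : b1 = a1 := by
    have h := eq_neg_of_add_eq_zero_right e3.symm
    rw [CharTwo.neg_eq] at h
    exact h
  rw [hb1] at e1 e2
  have hsum : a0 + b0 = a1 * a1 := by
    have h2' : (a0 + b0) + a1 * a1 = 0 := e2.symm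
    have h := eq_neg_of_add_eq_zero_left h2'
    rwa [CharTwo.neg_eq] at h
  have hX : Polynomial.X = a1 ^ 3 := by
    calc Polynomial.X = a1 * b0 + a0 * a1 := e1
      _ = a1 * (a0 + b0) := by ring
      _ = a1 * (a1 * a1) := by rw [hsum]
      _ = a1 ^ 3 := by ring
  have ha1 : a1 ≠ 0 := by
    intro h0
    rw [h0] at hX
    simp at hX
  have hdeg := congrArg natDegree hX
  rw [natDegree_X, natDegree_pow] at hdeg
  omega

lemma q0_irred : Irreducible q0 := by
  constructor
  · intro hu
    have := Polynomial.natDegree_eq_zero_of_isUnit hu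
    rw [q0_natDegree] at this
    omega
  · intro a b hab
    have hma : a.Monic := monic_of_factor hab
    have hmb : b.Monic := monic_of_factor (by rwa [mul_comm] at hab)
    have ha0 : a ≠ 0 := hma.ne_zero
    have hb0 : b ≠ 0 := hmb.ne_zero
    have hdeg : a.natDegree + b.natDegree = 4 := by
      rw [← Polynomial.natDegree_mul ha0 hb0, ← hab, q0_natDegree]
    rcases (by omega : a.natDegree = 0 ∨ a.natDegree = 1 ∨ a.natDegree = 2 ∨
        a.natDegree = 3 ∨ a.natDegree = 4) with h|h|h|h|h
    · left; rw [hma.natDegree_eq_zero.mp h]; exact isUnit_one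
    · exact (nofac1 hma h hab).elim
    · exact (nofac2 hma hmb h (by omega) hab).elim
    · have hb1 : b.natDegree = 1 := by omega
      exact (nofac1 hmb hb1 (by rwa [mul_comm] at hab)).elim
    · right
      have hb : b.natDegree = 0 := by omega
      rw [hmb.natDegree_eq_zero.mp hb]; exact isUnit_one
end

end

section
open Polynomial
noncomputable section
-- ## basic facts
instance PS_charP : CharP (PowerSeries (ZMod 2)) 2 := by
  apply charP_of_injective_ringHom (f := (PowerSeries.C : ZMod 2 →+* PowerSeries (ZMod 2)))
  intro x y hxy
  have := congrArg (PowerSeries.constantCoeff) hxy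
  simpa using this

instance K_charP : CharP K 2 :=
  charP_of_injective_ringHom (IsFractionRing.injective (PowerSeries (ZMod 2)) K) 2

lemma hGne : G ≠ 0 := by
  intro h
  have := congrArg (PowerSeries.coeff 3) h
  rw [G, PowerSeries.coeff_mk, if_pos ⟨0, by norm_num⟩] at this
  simpa using this

lemma hGc0 : PowerSeries.constantCoeff G = 0 := by
  have : PowerSeries.constantCoeff G = PowerSeries.coeff 0 G := by
    simp [PowerSeries.coeff_zero_eq_constantCoeff]
  rw [this, G, PowerSeries.coeff_mk, if_neg]
  rintro ⟨k, hk⟩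
  have : (2 * k + 1) ^ 2 > 0 := by positivity
  omega

lemma GalgAux : ∀ n (P : Polynomial (ZMod 2)), P.natDegree = n → Polynomial.aeval G P = 0 → P = 0 := by
  intro n
  induction n using Nat.strong_induction_on with
  | _ n ih =>
    intro P hn hP
    by_cases hP0 : P = 0
    · exact hP0
    have hc0 : P.coeff 0 = 0 := by
      have h := congrArg (PowerSeries.constantCoeff) hP
      rw [Polynomial.aeval_def, Polynomial.eval₂_eq_sum_range] at h
      rw [map_sum] at h
      rw [map_zero] at h
      -- constantCoeff (Σ C (coeff i) * G^i) = coeff 0 (since G has constant coeff 0)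
      rw [Finset.sum_eq_single 0] at h
      · simpa using h
      · intro i _ hi
        rcases Nat.exists_eq_succ_of_ne_zero hi with ⟨j, rfl⟩
        rw [map_mul, map_pow, hGc0]
        simp [zero_pow]
      · intro h0
        simp at h0
    obtain ⟨Q, hQ⟩ := Polynomial.X_dvd_iff.mpr hc0
    have hQ0 : Polynomial.aeval G Q = 0 := by
      rw [hQ, map_mul] at hP
      simp only [Polynomial.aeval_X] at hP
      rcases mul_eq_zero.mp hP with h | h
      · exact absurd h hGne
      · exact h
    have hQne : Q ≠ 0 := by rintro rfl; simp at hQ; exact hP0 hQ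
    have hdeg : Q.natDegree < n := by
      have : P.natDegree = 1 + Q.natDegree := by
        rw [hQ, Polynomial.natDegree_mul Polynomial.X_ne_zero hQne, Polynomial.natDegree_X]
      omega
    have := ih Q.natDegree (by omega) Q rfl hQ0
    rw [this, mul_zero] at hQ
    exact absurd hQ hP0

lemma Galg (P : Polynomial (ZMod 2)) (h : Polynomial.aeval G P = 0) : P = 0 :=
  GalgAux P.natDegree P rfl h
end

noncomputable section
def ev0 : Polynomial (ZMod 2) →+* PowerSeries (ZMod 2) := (Polynomial.aeval G).toRingHom

def ev : Polynomial (ZMod 2) →+* K := (algebraMap (PowerSeries (ZMod 2)) K).comp ev0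

lemma ev_inj : Function.Injective ev := by
  apply Function.Injective.comp (IsFractionRing.injective (PowerSeries (ZMod 2)) K)
  intro x y hxy
  have : Polynomial.aeval G (x - y) = 0 := by
    show ev0 (x - y) = 0
    rw [map_sub]
    show ev0 x - ev0 y = 0
    rw [show ev0 x = ev0 y from hxy, sub_self]
  exact sub_eq_zero.mp (Galg _ this)

def psi : RatFunc (ZMod 2) →+* K := IsFractionRing.lift (g := ev) ev_inj

lemma psi_alg (P : Polynomial (ZMod 2)) :
    psi (algebraMap (Polynomial (ZMod 2)) (RatFunc (ZMod 2)) P)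
      = algebraMap (PowerSeries (ZMod 2)) K (Polynomial.aeval G P) :=
  IsFractionRing.lift_algebraMap _ _

lemma psi_X : psi (algebraMap (Polynomial (ZMod 2)) (RatFunc (ZMod 2)) Polynomial.X) = G' := by
  rw [psi_alg]
  simp only [Polynomial.aeval_X]
  rfl

lemma zmod2_cases' (x : ZMod 2) : x = 0 ∨ x = 1 := by fin_cases x <;> [exact Or.inl rfl; exact Or.inr rfl]

lemma psi_mem_E (r : RatFunc (ZMod 2)) : psi r ∈ E := by
  have hpoly : ∀ P : Polynomial (ZMod 2),
      algebraMap (PowerSeries (ZMod 2)) K (Polynomial.aeval G P) ∈ E := by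
    intro P
    induction P using Polynomial.induction_on' with
    | add p q hp hq => rw [map_add, map_add]; exact E.add_mem hp hq
    | monomial n c =>
      rcases zmod2_cases' c with rfl | rfl
      · simp only [Polynomial.monomial_zero_right, map_zero]; exact E.zero_mem
      · rw [← Polynomial.C_mul_X_pow_eq_monomial]
        simp only [map_one, one_mul, map_pow, Polynomial.aeval_X]
        exact E.pow_mem (Subfield.subset_closure rfl) n
  rw [← RatFunc.num_div_denom r, map_div₀, psi_alg, psi_alg]
  exact E.div_mem (hpoly _) (hpoly _)

def psiE : RatFunc (ZMod 2) →+* E := psi.codRestrict E.toSubring psi_mem_E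

lemma psiE_bij : Function.Bijective psiE := by
  constructor
  · intro x y h
    exact psi.injective (congrArg Subtype.val h)
  · rintro ⟨x, hx⟩
    have hle : E ≤ psi.fieldRange := by
      show Subfield.closure {G'} ≤ psi.fieldRange
      rw [Subfield.closure_le]
      intro z hz
      rw [Set.mem_singleton_iff.mp hz]
      exact ⟨_, psi_X⟩
    have : x ∈ psi.fieldRange := hle hx
    obtain ⟨r, hr⟩ := this
    exact ⟨r, Subtype.ext hr⟩

def eE : RatFunc (ZMod 2) ≃+* E := RingEquiv.ofBijective psiE psiE_bij

lemma eE_X : eE (algebraMap (Polynomial (ZMod 2)) (RatFunc (ZMod 2)) Polynomial.X) = g :=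
  Subtype.ext psi_X

def qE : Polynomial E := X ^ 4 + (C g * X + C (g ^ 4))

lemma qE_eq_map : qE = (q0.map (algebraMap R2 (RatFunc (ZMod 2)))).map (eE : RatFunc (ZMod 2) →+* E) := by
  rw [Polynomial.map_map, q0, qE]
  simp only [Polynomial.map_add, Polynomial.map_mul, Polynomial.map_pow, Polynomial.map_X,
    Polynomial.map_C, RingHom.comp_apply, map_pow, RingEquiv.toRingHom_eq_coe, RingHom.coe_coe, eE_X]

lemma qE_irred : Irreducible qE := by
  rw [qE_eq_map]
  have h1 : Irreducible (q0.map (algebraMap R2 (RatFunc (ZMod 2)))) :=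
    (q0_monic.irreducible_iff_irreducible_map_fraction_map).mp q0_irred
  have : (q0.map (algebraMap R2 (RatFunc (ZMod 2)))).map (eE : RatFunc (ZMod 2) →+* E)
      = Polynomial.mapEquiv eE (q0.map (algebraMap R2 (RatFunc (ZMod 2)))) := rfl
  rw [this]
  exact (MulEquiv.irreducible_iff _).mpr h1

lemma qE_monic : qE.Monic := by
  unfold qE
  apply Polynomial.monic_X_pow_add
  calc (C g * X + C (g ^ 4)).degree
      ≤ max (C g * X).degree (C (g ^ 4)).degree := degree_add_le _ _
    _ ≤ max 1 0 := by
        apply max_le_max _ degree_C_le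
        calc (C g * X).degree ≤ 0 + 1 :=
              le_trans (degree_mul_le _ _) (add_le_add degree_C_le degree_X_le)
          _ = 1 := by norm_num
    _ < 4 := by norm_num

lemma qE_natDegree : qE.natDegree = 4 := by
  unfold qE
  rw [Polynomial.natDegree_add_eq_left_of_natDegree_lt, natDegree_X_pow]
  rw [natDegree_X_pow]
  have : (C g * X + C (g ^ 4)).natDegree ≤ 1 := by
    apply le_trans (natDegree_add_le _ _)
    apply max_le
    · exact le_trans (natDegree_mul_le) (by simp)
    · simp
  omega
end

noncomputable section
lemma hrelK : F' ^ 4 = G' * F' + G' ^ 4 := by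
  have h := congrArg (algebraMap (PowerSeries (ZMod 2)) K) key
  rw [map_mul, map_add, map_pow, map_pow] at h
  have h' : F' * G' = F' ^ 4 + G' ^ 4 := h
  rw [mul_comm] at h'
  rw [h', add_assoc, CharTwo.add_self_eq_zero, add_zero]

lemma haevK : Polynomial.aeval F' qE = 0 := by
  rw [qE]
  simp only [map_add, map_pow, Polynomial.aeval_X, map_mul, Polynomial.aeval_C]
  have hg : algebraMap E K g = G' := rfl
  rw [hg, hrelK, CharTwo.add_self_eq_zero]

lemma hFeint : IsIntegral E F' := ⟨qE, qE_monic, by rw [← Polynomial.aeval_def]; exact haevK⟩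

lemma hminpoly : minpoly E F' = qE :=
  (minpoly.eq_of_irreducible_of_monic qE_irred haevK qE_monic).symm

def pb : PowerBasis E L := IntermediateField.adjoin.powerBasis hFeint

lemma pb_gen : pb.gen = Fe := rfl

lemma pb_dim : pb.dim = 4 := by
  rw [pb, IntermediateField.adjoin.powerBasis_dim, hminpoly, qE_natDegree]

def bb : Module.Basis (Fin 4) E L := pb.basis.reindex (finCongr pb_dim)

lemma bb_apply (i : Fin 4) : bb i = Fe ^ (i : ℕ) := by
  rw [bb, Module.Basis.reindex_apply, PowerBasis.coe_basis, pb_gen]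
  congr 1

-- char 2 for E and L
instance : CharP E 2 := by
  apply CharTwo.of_one_ne_zero_of_two_eq_zero one_ne_zero
  apply Subtype.ext
  show ((2 : E) : K) = (0 : K)
  push_cast
  exact CharTwo.two_eq_zero

instance : CharP L 2 := by
  apply CharTwo.of_one_ne_zero_of_two_eq_zero one_ne_zero
  apply Subtype.ext
  show ((2 : L) : K) = (0 : K)
  push_cast
  exact CharTwo.two_eq_zero

lemma hrelL : Fe ^ 4 = gL * Fe + gL ^ 4 := by
  apply Subtype.ext
  push_cast
  show F' ^ 4 = G' * F' + G' ^ 4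
  exact hrelK


end
end

noncomputable section
lemma bb0 : bb 0 = 1 := by
  have h : ((0 : Fin 4) : ℕ) = 0 := rfl
  rw [bb_apply, h, pow_zero]
lemma bb1 : bb 1 = Fe := by
  have h : ((1 : Fin 4) : ℕ) = 1 := rfl
  rw [bb_apply, h, pow_one]
lemma bb2 : bb 2 = Fe ^ 2 := by
  have h : ((2 : Fin 4) : ℕ) = 2 := rfl
  rw [bb_apply, h]
lemma bb3 : bb 3 = Fe ^ 3 := by
  have h : ((3 : Fin 4) : ℕ) = 3 := rfl
  rw [bb_apply, h]

lemma A5 : Fe ^ 5 = gL * Fe ^ 2 + gL ^ 4 * Fe := by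
  have h : Fe ^ 5 = Fe ^ 4 * Fe := by ring
  rw [h, hrelL]; ring

lemma A6 : Fe ^ 6 = gL * Fe ^ 3 + gL ^ 4 * Fe ^ 2 := by
  have h : Fe ^ 6 = Fe ^ 5 * Fe := by ring
  rw [h, A5]; ring

lemma gL_smul (x : L) : gL * x = g • x := (Algebra.smul_def g x).symm

lemma gL4_smul (x : L) : gL ^ 4 * x = (g ^ 4) • x := by
  rw [Algebra.smul_def, gL, ← map_pow]

lemma repr_comb (c d : E) (j k i : Fin 4) :
    bb.repr (c • bb j + d • bb k) i = (if j = i then c else 0) + (if k = i then d else 0) := by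
  rw [map_add, map_smul, map_smul, Module.Basis.repr_self, Module.Basis.repr_self]
  simp [Finsupp.single_apply]

lemma repr_single (c : E) (j i : Fin 4) :
    bb.repr (c • bb j) i = (if j = i then c else 0) := by
  rw [map_smul, Module.Basis.repr_self]
  simp [Finsupp.single_apply]

lemma trace_eq (x : L) :
    Algebra.trace E L x = bb.repr (x * bb 0) 0 + bb.repr (x * bb 1) 1
      + bb.repr (x * bb 2) 2 + bb.repr (x * bb 3) 3 := by
  rw [Algebra.trace_eq_matrix_trace bb x, Matrix.trace, Fin.sum_univ_four]
  simp only [Matrix.diag_apply, Algebra.leftMulMatrix_eq_repr_mul]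

lemma trace_gL : Algebra.trace E L gL = 0 := by
  rw [trace_eq]
  have h : ∀ i : Fin 4, bb.repr (gL * bb i) i = g := by
    intro i
    rw [gL_smul, repr_single, if_pos rfl]
  rw [h 0, h 1, h 2, h 3]
  have hxx : ∀ x : E, x + x = 0 := fun x => CharTwo.add_self_eq_zero x
  simp only [hxx, zero_add, add_zero]

lemma hFe4' : Fe ^ 4 = g • bb 1 + (g ^ 4) • bb 0 := by
  rw [bb1, bb0, ← gL_smul, ← gL4_smul, mul_one, hrelL]

lemma hFe5' : Fe ^ 5 = g • bb 2 + (g ^ 4) • bb 1 := by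
  rw [bb2, bb1, ← gL_smul, ← gL4_smul, A5]

lemma hFe6' : Fe ^ 6 = g • bb 3 + (g ^ 4) • bb 2 := by
  rw [bb3, bb2, ← gL_smul, ← gL4_smul, A6]

lemma trace_Fe : Algebra.trace E L Fe = 0 := by
  rw [trace_eq]
  have e0 : Fe * bb 0 = (1 : E) • bb 1 := by rw [bb0, bb1, mul_one, one_smul]
  have e1 : Fe * bb 1 = (1 : E) • bb 2 := by rw [bb1, bb2, one_smul]; ring
  have e2 : Fe * bb 2 = (1 : E) • bb 3 := by rw [bb2, bb3, one_smul]; ring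
  have e3 : Fe * bb 3 = g • bb 1 + (g ^ 4) • bb 0 := by
    rw [bb3, ← hFe4']; ring
  rw [e0, e1, e2, e3, repr_single, repr_single, repr_single, repr_comb]
  rw [if_neg (show ¬(1 : Fin 4) = 0 by decide), if_neg (show ¬(2 : Fin 4) = 1 by decide),
    if_neg (show ¬(3 : Fin 4) = 2 by decide), if_neg (show ¬(1 : Fin 4) = 3 by decide),
    if_neg (show ¬(0 : Fin 4) = 3 by decide)]
  simp only [zero_add, add_zero]

lemma trace_Fe2gL : Algebra.trace E L (Fe ^ 2 * gL) = 0 := by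
  rw [trace_eq]
  have e0 : Fe ^ 2 * gL * bb 0 = g • bb 2 := by
    rw [bb0, bb2, mul_one, mul_comm, gL_smul]
  have e1 : Fe ^ 2 * gL * bb 1 = g • bb 3 := by
    rw [bb1, bb3, ← gL_smul]; ring
  have e2 : Fe ^ 2 * gL * bb 2 = (g * g) • bb 1 + (g * g ^ 4) • bb 0 := by
    have h : Fe ^ 2 * gL * bb 2 = gL * Fe ^ 4 := by rw [bb2]; ring
    rw [h, hFe4', mul_add, gL_smul, gL_smul, smul_smul, smul_smul]
  have e3 : Fe ^ 2 * gL * bb 3 = (g * g) • bb 2 + (g * g ^ 4) • bb 1 := by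
    have h : Fe ^ 2 * gL * bb 3 = gL * Fe ^ 5 := by rw [bb3]; ring
    rw [h, hFe5', mul_add, gL_smul, gL_smul, smul_smul, smul_smul]
  rw [e0, e1, e2, e3, repr_single, repr_single, repr_comb, repr_comb]
  rw [if_neg (show ¬(2 : Fin 4) = 0 by decide), if_neg (show ¬(3 : Fin 4) = 1 by decide),
    if_neg (show ¬(1 : Fin 4) = 2 by decide), if_neg (show ¬(0 : Fin 4) = 2 by decide),
    if_neg (show ¬(2 : Fin 4) = 3 by decide), if_neg (show ¬(1 : Fin 4) = 3 by decide)]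
  simp only [zero_add, add_zero]

lemma trace_Fe3 : Algebra.trace E L (Fe ^ 3) = g := by
  rw [trace_eq]
  have e0 : Fe ^ 3 * bb 0 = (1 : E) • bb 3 := by rw [bb0, bb3, mul_one, one_smul]
  have e1 : Fe ^ 3 * bb 1 = g • bb 1 + (g ^ 4) • bb 0 := by
    rw [← hFe4', bb1]; ring
  have e2 : Fe ^ 3 * bb 2 = g • bb 2 + (g ^ 4) • bb 1 := by
    rw [← hFe5', bb2]; ring
  have e3 : Fe ^ 3 * bb 3 = g • bb 3 + (g ^ 4) • bb 2 := by
    rw [← hFe6', bb3]; ring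
  rw [e0, e1, e2, e3, repr_single, repr_comb, repr_comb, repr_comb]
  rw [if_neg (show ¬(3 : Fin 4) = 0 by decide), if_pos (show (1 : Fin 4) = 1 from rfl),
    if_neg (show ¬(0 : Fin 4) = 1 by decide), if_pos (show (2 : Fin 4) = 2 from rfl),
    if_neg (show ¬(1 : Fin 4) = 2 by decide), if_pos (show (3 : Fin 4) = 3 from rfl),
    if_neg (show ¬(2 : Fin 4) = 3 by decide)]
  have hxx : ∀ x : E, x + x = 0 := fun x => CharTwo.add_self_eq_zero x
  simp only [zero_add, add_zero, hxx]


end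

/-- The field trace of the extension `(Z/2)(F,G)/(Z/2)(G)` sends
`G, F, F²G, F³` to `0, 0, 0, G`. -/
theorem stmt_8 :
    Algebra.trace E L gL = 0 ∧ Algebra.trace E L Fe = 0 ∧
    Algebra.trace E L (Fe ^ 2 * gL) = 0 ∧ Algebra.trace E L (Fe ^ 3) = g :=
  ⟨trace_gL, trace_Fe, trace_Fe2gL, trace_Fe3⟩
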